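/- Let g_1 = 1, g_{j+1} = 1 - exp(-g_j). For any j ≥ 1, constants c_1 ≥ 1, c_2 ≥ 0, and 0 ≤ λ ≤ n: the sum over i from 0 to n of C(n,i)(λ/n)^i(1-λ/n)^{n-i} exp(-i g_j) (1 - (c_1 i^2 + c_2 i)/n · Σ_{m=1}^{j} g_m^2) is at least exp(-λ g_{j+1}) (1 - (c_1 λ^2 + (c_1 + c_2) λ)/n · Σ_{m=1}^{j+1} g_m^2). -/

import Mathlib

open Finset

lemma sum_choose_pow (x y : ℝ) (n : ℕ) :
    ∑ i ∈ range (n+1), (n.choose i : ℝ) * x^i * y^(n-i) = (x+y)^n := by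
  rw [add_pow]
  exact Finset.sum_congr rfl (fun i _ => by ring)

lemma sum_choose_mul_pow (x y : ℝ) (n : ℕ) :
    ∑ i ∈ range (n+1), (n.choose i : ℝ) * i * x^i * y^(n-i)
      = n * x * (x+y)^(n-1) := by
  cases n with
  | zero => simp
  | succ m =>
    rw [Finset.sum_range_succ']
    simp only [Nat.cast_zero, mul_zero, zero_mul, pow_zero, add_zero]
    have h : ∀ k, ((m+1).choose (k+1) : ℝ) * (k+1 : ℕ) = (m+1) * (m.choose k : ℝ) := by
      intro k
      have := Nat.add_one_mul_choose_eq m k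
      have : ((m+1) * m.choose k : ℕ) = ((m+1).choose (k+1) * (k+1) : ℕ) := this
      exact_mod_cast this.symm
    have : ∑ k ∈ range (m+1), ((m+1).choose (k+1) : ℝ) * (k+1 : ℕ) * x^(k+1) * y^(m+1-(k+1))
        = (m+1) * x * ∑ k ∈ range (m+1), (m.choose k : ℝ) * x^k * y^(m-k) := by
      rw [Finset.mul_sum]
      refine Finset.sum_congr rfl (fun k hk => ?_)
      rw [h k]
      have : m + 1 - (k+1) = m - k := by omega
      rw [this]
      ring
    rw [this, sum_choose_pow]
    push_cast
    ring

lemma sum_choose_mul_mul_pow (x y : ℝ) (n : ℕ) :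
    ∑ i ∈ range (n+1), (n.choose i : ℝ) * ((i:ℝ) * ((i:ℝ)-1)) * x^i * y^(n-i)
      = n * ((n:ℝ)-1) * x^2 * (x+y)^(n-2) := by
  cases n with
  | zero => simp
  | succ m =>
    rw [Finset.sum_range_succ']
    simp only [Nat.cast_zero, mul_zero, zero_mul, pow_zero, zero_sub, mul_one, add_zero]
    have h : ∀ k, ((m+1).choose (k+1) : ℝ) * ((k+1 : ℕ):ℝ) = (m+1) * (m.choose k : ℝ) := by
      intro k
      have := Nat.add_one_mul_choose_eq m k
      have : ((m+1) * m.choose k : ℕ) = ((m+1).choose (k+1) * (k+1) : ℕ) := this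
      exact_mod_cast this.symm
    have key : ∑ k ∈ range (m+1),
        ((m+1).choose (k+1) : ℝ) * (((k+1:ℕ):ℝ) * (((k+1:ℕ):ℝ)-1)) * x^(k+1) * y^(m+1-(k+1))
        = (m+1) * x * ∑ k ∈ range (m+1), (m.choose k : ℝ) * k * x^k * y^(m-k) := by
      rw [Finset.mul_sum]
      refine Finset.sum_congr rfl (fun k hk => ?_)
      have h2 : m + 1 - (k+1) = m - k := by omega
      rw [h2]
      have := h k
      push_cast at this ⊢
      linear_combination ((k:ℝ) * x^(k+1) * y^(m-k)) * this
    rw [key, sum_choose_mul_pow]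
    have : (m+1 : ℕ) - 2 = m - 1 := by omega
    rw [this]
    push_cast
    ring

lemma pow_lower (n : ℕ) (hn : 0 < n) (a : ℝ) (ha0 : 0 ≤ a) (han : a ≤ n) :
    Real.exp (-a) * (1 - a^2/n) ≤ (1 - a/n)^n := by
  have hN : (0:ℝ) < n := by exact_mod_cast hn
  have h1 : 0 ≤ 1 - a/n := by
    rw [sub_nonneg, div_le_one hN]; exact han
  have hb : 1 - a^2/n ≤ (1 - a/n)^n * (1 + a/n)^n := by
    have hsq : a^2 ≤ (n:ℝ)^2 := by nlinarith
    have hdiv : a^2/(n:ℝ)^2 ≤ 1 := by rw [div_le_one (by positivity)]; exact hsq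
    have := one_add_mul_le_pow (a := -(a^2/n^2)) (by linarith) n
    have he : ((1 - a/n) * (1 + a/n))^n = (1 + -(a^2/n^2))^n := by
      congr 1; field_simp; ring
    calc 1 - a^2/n = 1 + n * (-(a^2/n^2)) := by field_simp; ring
    _ ≤ (1 + -(a^2/n^2))^n := this
    _ = (1 - a/n)^n * (1 + a/n)^n := by rw [← he, mul_pow]
  have hc : (1 + a/n)^n ≤ Real.exp a := by
    have h2 : 1 + a/n ≤ Real.exp (a/n) := by
      have := Real.add_one_le_exp (a/n); linarith
    calc (1 + a/n)^n ≤ (Real.exp (a/n))^n := by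
          apply pow_le_pow_left₀ (by positivity) h2
    _ = Real.exp a := by
          rw [← Real.exp_nat_mul]; congr 1; field_simp
  have hE : 0 < Real.exp (-a) := Real.exp_pos _
  calc Real.exp (-a) * (1 - a^2/n) ≤ Real.exp (-a) * ((1 - a/n)^n * (1 + a/n)^n) := by
        apply mul_le_mul_of_nonneg_left hb hE.le
  _ ≤ Real.exp (-a) * ((1 - a/n)^n * Real.exp a) := by
        apply mul_le_mul_of_nonneg_left _ hE.le
        exact mul_le_mul_of_nonneg_left hc (by positivity)
  _ = (1 - a/n)^n := by
        rw [show Real.exp (-a) * ((1 - a/n)^n * Real.exp a)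
            = (1 - a/n)^n * (Real.exp a * Real.exp (-a)) from by ring, ← Real.exp_add]
        simp

set_option maxHeartbeats 1600000 in
theorem binomial_exp_moment_lower (n : ℕ) (hn : 0 < n) (lam : ℝ)
    (hlam0 : 0 ≤ lam) (hlamn : lam ≤ n)
    (c₁ c₂ : ℝ) (hc₁ : 1 ≤ c₁) (hc₂ : 0 ≤ c₂)
    (g : ℕ → ℝ) (hg1 : g 1 = 1)
    (hgrec : ∀ k ≥ 1, g (k + 1) = 1 - Real.exp (-(g k)))
    (j : ℕ) (hj : 1 ≤ j) :
    ∑ i ∈ Finset.range (n + 1),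
      (n.choose i : ℝ) * (lam / n) ^ i * (1 - lam / n) ^ (n - i) *
        Real.exp (-(i : ℝ) * g j) *
        (1 - (c₁ * (i : ℝ) ^ 2 + c₂ * i) / n * ∑ m ∈ Finset.Icc 1 j, (g m) ^ 2)
      ≥ Real.exp (-lam * g (j + 1)) *
        (1 - (c₁ * lam ^ 2 + (c₁ + c₂) * lam) / n * ∑ m ∈ Finset.Icc 1 (j + 1), (g m) ^ 2) := by
  have hN : (0:ℝ) < n := by exact_mod_cast hn
  set N : ℝ := (n:ℝ) with hNdef
  set p : ℝ := lam / N with hpdef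
  set q : ℝ := Real.exp (-(g j)) with hqdef
  set x : ℝ := p * q with hxdef
  set y : ℝ := 1 - p with hydef
  set G : ℝ := g (j+1) with hGdef
  set S : ℝ := ∑ m ∈ Finset.Icc 1 j, (g m)^2 with hSdef
  have hq0 : 0 < q := Real.exp_pos _
  -- nonnegativity of g
  have hgpos : ∀ k, 1 ≤ k → 0 ≤ g k := by
    intro k hk
    induction k with
    | zero => omega
    | succ m ih =>
      rcases Nat.lt_or_ge 1 (m+1) with h | h
      · have hm : 1 ≤ m := by omega
        rw [hgrec m hm]
        have : Real.exp (-(g m)) ≤ 1 := by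
          rw [Real.exp_le_one_iff]; linarith [ih hm]
        linarith
      · have : m = 0 := by omega
        subst this; rw [hg1]; norm_num
  have hgj0 : 0 ≤ g j := hgpos j hj
  have hGq : G = 1 - q := by rw [hGdef, hgrec j hj, hqdef]
  have hG0 : 0 ≤ G := by
    rw [hGq]
    have : q ≤ 1 := by rw [hqdef, Real.exp_le_one_iff]; linarith
    linarith
  have hG1 : G ≤ 1 := by rw [hGq]; linarith
  have hGgj : G ≤ g j := by
    rw [hGq, hqdef]
    have := Real.add_one_le_exp (-(g j))
    linarith
  have hqG : q ≤ Real.exp (-G) := by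
    rw [hqdef]; exact Real.exp_le_exp.mpr (by linarith)
  have hp0 : 0 ≤ p := div_nonneg hlam0 hN.le
  have hp1 : p ≤ 1 := by rw [hpdef, div_le_one hN]; exact hlamn
  have hx0 : 0 ≤ x := mul_nonneg hp0 hq0.le
  have hy0 : 0 ≤ y := by rw [hydef]; linarith
  have hA0 : 0 ≤ x + y := add_nonneg hx0 hy0
  have hpN : p * N = lam := by rw [hpdef]; field_simp
  have hA : x + y = 1 - lam * G / N := by
    rw [hxdef, hydef, hGq, hpdef]; field_simp; ring
  have hAexp : x + y ≤ Real.exp (-(lam * G / N)) := by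
    rw [hA]
    have := Real.add_one_le_exp (-(lam * G / N))
    linarith
  have hS0 : 0 ≤ S := Finset.sum_nonneg fun m _ => sq_nonneg _
  set E : ℝ := Real.exp (-(lam * G)) with hEdef
  have hE0 : 0 < E := Real.exp_pos _
  have hlamG0 : 0 ≤ lam * G := mul_nonneg hlam0 hG0
  have hlamGN : lam * G ≤ N := by
    have : lam * G ≤ lam * 1 := mul_le_mul_of_nonneg_left hG1 hlam0
    linarith
  have hdivG : lam * G / N ≤ G := by
    rw [div_le_iff₀ hN]
    calc lam * G ≤ N * G := mul_le_mul_of_nonneg_right hlamn hG0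
    _ = G * N := mul_comm _ _
  -- the sum identity
  have hsum : ∑ i ∈ Finset.range (n + 1),
      (n.choose i : ℝ) * (lam / ↑n) ^ i * (1 - lam / ↑n) ^ (n - i) *
        Real.exp (-(i : ℝ) * g j) *
        (1 - (c₁ * (i : ℝ) ^ 2 + c₂ * i) / ↑n * S)
      = (x+y)^n - S/N * c₁ * (N * (N-1) * x^2 * (x+y)^(n-2))
          - S/N * (c₁+c₂) * (N * x * (x+y)^(n-1)) := by
    rw [← sum_choose_pow x y n, ← sum_choose_mul_mul_pow x y n, ← sum_choose_mul_pow x y n,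
      Finset.mul_sum, Finset.mul_sum, ← Finset.sum_sub_distrib, ← Finset.sum_sub_distrib]
    refine Finset.sum_congr rfl (fun i _ => ?_)
    have hexp : Real.exp (-(i:ℝ) * g j) = q ^ i := by
      rw [show -(i:ℝ) * g j = (i:ℝ) * (-(g j)) by ring, Real.exp_nat_mul, hqdef]
    rw [hexp, hxdef, mul_pow]
    rw [hpdef, hNdef]
    ring
  -- bound 1 : zeroth moment
  have h1 : E * (1 - (lam*G)^2/N) ≤ (x+y)^n := by
    rw [hA]
    have := pow_lower n hn (lam*G) hlamG0 hlamGN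
    convert this using 3 <;> ring
  -- bound on powers of A
  have hApow : ∀ m : ℕ, (x+y)^m ≤ Real.exp ((m:ℝ) * (-(lam * G / N))) := by
    intro m
    calc (x+y)^m ≤ (Real.exp (-(lam * G / N)))^m := pow_le_pow_left₀ hA0 hAexp m
    _ = Real.exp ((m:ℝ) * (-(lam * G / N))) := (Real.exp_nat_mul _ m).symm
  -- bound 2 : first moment
  have h2 : N * x * (x+y)^(n-1) ≤ lam * E := by
    have hNx : N * x = lam * q := by rw [hxdef, hpdef]; field_simp
    rw [hNx]
    have hcast : (N:ℝ) - 1 ≤ ((n - 1 : ℕ):ℝ) := by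
      rw [Nat.cast_sub hn]; simp [hNdef]
    have hq1 : q * (x+y)^(n-1) ≤ E := by
      calc q * (x+y)^(n-1)
          ≤ Real.exp (-G) * Real.exp (((n-1:ℕ):ℝ) * (-(lam * G / N))) := by
            apply mul_le_mul hqG (hApow (n-1)) (by positivity) (Real.exp_pos _).le
      _ = Real.exp (-G + ((n-1:ℕ):ℝ) * (-(lam * G / N))) := (Real.exp_add _ _).symm
      _ ≤ E := by
            rw [hEdef, Real.exp_le_exp]
            have hmul : ((n-1:ℕ):ℝ) * (lam * G / N) ≥ (N - 1) * (lam * G / N) := by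
              apply mul_le_mul_of_nonneg_right hcast (by positivity)
            have hid : (N - 1) * (lam * G / N) = lam * G - lam * G / N := by
              field_simp
            linarith [hmul, hid, hdivG]
    calc lam * q * (x+y)^(n-1) = lam * (q * (x+y)^(n-1)) := by ring
    _ ≤ lam * E := mul_le_mul_of_nonneg_left hq1 hlam0
  -- bound 3 : second factorial moment
  have h3 : N * (N-1) * x^2 * (x+y)^(n-2) ≤ lam^2 * E := by
    have hcast : (N:ℝ) - 2 ≤ ((n - 2 : ℕ):ℝ) := by
      rcases Nat.lt_or_ge n 2 with h | h
      · have : n = 1 := by omega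
        subst this; norm_num [hNdef]
      · rw [Nat.cast_sub h]; simp [hNdef]
    have hq2 : q^2 * (x+y)^(n-2) ≤ E := by
      calc q^2 * (x+y)^(n-2)
          ≤ (Real.exp (-G))^2 * Real.exp (((n-2:ℕ):ℝ) * (-(lam * G / N))) := by
            apply mul_le_mul (pow_le_pow_left₀ hq0.le hqG 2) (hApow (n-2))
              (by positivity) (by positivity)
      _ = Real.exp (-G * 2 + ((n-2:ℕ):ℝ) * (-(lam * G / N))) := by
            rw [← Real.exp_nat_mul, ← Real.exp_add]; norm_num; ring_nf
      _ ≤ E := by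
            rw [hEdef, Real.exp_le_exp]
            have hmul : ((n-2:ℕ):ℝ) * (lam * G / N) ≥ (N - 2) * (lam * G / N) := by
              apply mul_le_mul_of_nonneg_right hcast (by positivity)
            have hid : (N - 2) * (lam * G / N) = lam * G - 2 * (lam * G / N) := by
              field_simp
            linarith [hmul, hid, hdivG]
    have hcoef : N * (N-1) * p^2 ≤ lam^2 := by
      have h0 : 0 ≤ p^2 * N := by positivity
      calc N * (N-1) * p^2 = (p*N)^2 - p^2 * N := by ring
      _ ≤ (p*N)^2 := by linarith
      _ = lam^2 := by rw [hpN]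
    have hx2 : x^2 = p^2 * q^2 := by rw [hxdef]; ring
    calc N * (N-1) * x^2 * (x+y)^(n-2)
        = (N * (N-1) * p^2) * (q^2 * (x+y)^(n-2)) := by rw [hx2]; ring
    _ ≤ lam^2 * (q^2 * (x+y)^(n-2)) := by
          apply mul_le_mul_of_nonneg_right hcoef
          positivity
    _ ≤ lam^2 * E := mul_le_mul_of_nonneg_left hq2 (by positivity)
  -- the RHS sum
  have hIcc : Finset.Icc 1 (j+1) = insert (j+1) (Finset.Icc 1 j) := by
    ext m; simp only [Finset.mem_Icc, Finset.mem_insert]; omega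
  have hnotmem : j+1 ∉ Finset.Icc 1 j := by simp
  have hRHSsum : ∑ m ∈ Finset.Icc 1 (j+1), (g m)^2 = G^2 + S := by
    rw [hIcc, Finset.sum_insert hnotmem, hGdef, hSdef]
  have hEeq : Real.exp (-lam * g (j+1)) = E := by
    rw [hEdef, hGdef]; ring_nf
  rw [ge_iff_le, hsum, hRHSsum, hEeq]
  have hmid1 : S/N * c₁ * (N * (N-1) * x^2 * (x+y)^(n-2)) ≤ S/N * c₁ * (lam^2 * E) := by
    apply mul_le_mul_of_nonneg_left h3
    positivity
  have hmid2 : S/N * (c₁+c₂) * (N * x * (x+y)^(n-1)) ≤ S/N * (c₁+c₂) * (lam * E) := by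
    apply mul_le_mul_of_nonneg_left h2
    have : 0 ≤ c₁ + c₂ := by linarith
    positivity
  have hfinal : E * (1 - (c₁ * lam ^ 2 + (c₁ + c₂) * lam) / N * (G^2 + S))
      ≤ E * (1 - (lam*G)^2/N) - S/N * c₁ * (lam^2 * E) - S/N * (c₁+c₂) * (lam * E) := by
    have key : 0 ≤ E * G^2 / N * ((c₁-1)*lam^2 + (c₁+c₂)*lam) := by
      have h1' : 0 ≤ (c₁-1)*lam^2 := mul_nonneg (by linarith) (sq_nonneg _)
      have h2' : 0 ≤ (c₁+c₂)*lam := mul_nonneg (by linarith) hlam0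
      exact mul_nonneg (by positivity) (add_nonneg h1' h2')
    have hiden : E * (1 - (lam*G)^2/N) - S/N * c₁ * (lam^2 * E) - S/N * (c₁+c₂) * (lam * E)
        - E * (1 - (c₁ * lam ^ 2 + (c₁ + c₂) * lam) / N * (G^2 + S))
        = E * G^2 / N * ((c₁-1)*lam^2 + (c₁+c₂)*lam) := by
      field_simp; ring
    linarith
  linarith
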